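/- Let m : (0,∞) → ℝ be continuously differentiable with m(r) > 0, m'(r) ≥ 0 for all r > 0, and suppose lim_{r→∞} r·m'(r)/m(r) = 0, together with the bound m'(lr) ≤ l^C m'(r) for all l ≥ 1 and r > 0 (for some constant C > 0). Then for every l > 0, lim_{ρ→0⁺} m(l/ρ)/m(1/ρ) = 1. -/

import Mathlib

open Set Filter Topology

theorem key_ratio (m m' : ℝ → ℝ) (C : ℝ) (hC : 0 < C)
    (hderiv : ∀ r > 0, HasDerivAt m (m' r) r)
    (hmpos : ∀ r > 0, 0 < m r)
    (hm'pos : ∀ r > 0, 0 ≤ m' r)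
    (hlim : Tendsto (fun r => r * m' r / m r) atTop (𝓝 0))
    (hdoub : ∀ r > 0, ∀ l ≥ (1:ℝ), m' (l * r) ≤ l ^ C * m' r)
    (l : ℝ) (hl : 1 ≤ l) :
    Tendsto (fun r => m (l * r) / m r) atTop (𝓝 1) := by
  rcases eq_or_lt_of_le hl with h1 | h1
  · apply Tendsto.congr' _ tendsto_const_nhds
    filter_upwards [eventually_gt_atTop 0] with r hr
    rw [← h1, one_mul, div_self (hmpos r hr).ne']
  · have hl0 : (0:ℝ) < l := lt_trans one_pos h1
    have hb : ∀ r > (0:ℝ), 1 ≤ m (l * r) / m r ∧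
        m (l * r) / m r ≤ 1 + (l ^ C * (l - 1)) * (r * m' r / m r) := by
      intro r hr
      have hmr := hmpos r hr
      have hrl : r < l * r := by nlinarith
      obtain ⟨c, hc, hceq⟩ := exists_hasDerivAt_eq_slope m m' hrl
        (fun x hx => ((hderiv x (lt_of_lt_of_le hr hx.1)).continuousAt).continuousWithinAt)
        (fun x hx => hderiv x (lt_trans hr hx.1))
      have hc0 : 0 < c := lt_trans hr hc.1
      have hne : l * r - r ≠ 0 := by nlinarith
      rw [eq_div_iff hne] at hceq
      have hdiff : m (l * r) - m r = m' c * (l * r - r) := by linarith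
      constructor
      · have h0 : 0 ≤ m' c * (l * r - r) :=
          mul_nonneg (hm'pos c hc0) (by nlinarith)
        rw [le_div_iff₀ hmr]
        nlinarith
      · -- bound m' c ≤ l ^ C * m' r
        have hcr : 1 ≤ c / r := (one_le_div hr).mpr hc.1.le
        have hcrl : c / r ≤ l := by
          rw [div_le_iff₀ hr]
          exact hc.2.le
        have hd := hdoub r hr (c / r) hcr
        rw [div_mul_cancel₀ c hr.ne'] at hd
        have hpow : (c / r) ^ C ≤ l ^ C :=
          Real.rpow_le_rpow (by positivity) hcrl hC.le
        have hmc : m' c ≤ l ^ C * m' r :=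
          hd.trans (mul_le_mul_of_nonneg_right hpow (hm'pos r hr))
        have hnum : m (l * r) ≤ m r + (l ^ C * (l - 1)) * (r * m' r) := by
          have h2 : m' c * (l * r - r) ≤ (l ^ C * m' r) * (l * r - r) :=
            mul_le_mul_of_nonneg_right hmc (by nlinarith)
          nlinarith
        calc m (l * r) / m r ≤ (m r + (l ^ C * (l - 1)) * (r * m' r)) / m r := by
              gcongr
            _ = 1 + (l ^ C * (l - 1)) * (r * m' r / m r) := by
              field_simp
    have hupper : Tendsto (fun r => 1 + (l ^ C * (l - 1)) * (r * m' r / m r))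
        atTop (𝓝 1) := by
      have h2 : Tendsto (fun r => l ^ C * (l - 1) * (r * m' r / m r)) atTop
          (𝓝 (l ^ C * (l - 1) * 0)) := (tendsto_const_nhds (x := l ^ C * (l - 1))).mul hlim
      have h3 := (tendsto_const_nhds (x := (1:ℝ))).add h2
      simpa using h3
    refine tendsto_of_tendsto_of_tendsto_of_le_of_le' tendsto_const_nhds hupper ?_ ?_
    · filter_upwards [eventually_gt_atTop 0] with r hr using (hb r hr).1
    · filter_upwards [eventually_gt_atTop 0] with r hr using (hb r hr).2

/-- slow variation of `m` at infinity. -/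
theorem stmt2 (m m' : ℝ → ℝ) (C : ℝ) (hC : 0 < C)
    (hderiv : ∀ r > 0, HasDerivAt m (m' r) r)
    (hcont : ContinuousOn m' (Set.Ioi 0))
    (hmpos : ∀ r > 0, 0 < m r)
    (hm'pos : ∀ r > 0, 0 ≤ m' r)
    (hlim : Tendsto (fun r => r * m' r / m r) atTop (𝓝 0))
    (hdoub : ∀ r > 0, ∀ l ≥ (1:ℝ), m' (l * r) ≤ l ^ C * m' r) :
    ∀ l > (0:ℝ),
      Tendsto (fun ρ => m (l / ρ) / m (1 / ρ)) (𝓝[>] 0) (𝓝 1) := by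
  intro l hl
  have hinv : Tendsto (fun ρ : ℝ => 1 / ρ) (𝓝[>] 0) atTop := by
    simpa [one_div] using tendsto_inv_nhdsGT_zero
  rcases le_or_gt 1 l with h1 | h1
  · have hk := (key_ratio m m' C hC hderiv hmpos hm'pos hlim hdoub l h1).comp hinv
    apply hk.congr
    intro ρ
    simp [Function.comp, one_div, ← div_eq_mul_inv]
  · have h1l : 1 ≤ 1 / l := by
      rw [le_div_iff₀ hl]; linarith
    have hlinv : Tendsto (fun ρ : ℝ => l / ρ) (𝓝[>] 0) atTop := by
      have := hinv.const_mul_atTop hl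
      simpa [mul_one_div, div_eq_mul_inv] using this
    have hk := (key_ratio m m' C hC hderiv hmpos hm'pos hlim hdoub (1 / l) h1l).comp hlinv
    have hk' : Tendsto (fun ρ => m (1 / ρ) / m (l / ρ)) (𝓝[>] 0) (𝓝 1) := by
      apply hk.congr
      intro ρ
      have h : l⁻¹ * (l / ρ) = ρ⁻¹ := by
        field_simp
      simp [Function.comp, one_div, h]
    have := hk'.inv₀ one_ne_zero
    simpa [inv_div] using this
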